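/- Let B be the bipath poset, with underlying set (ℝ × {1,2}) ⊔ {−∞, +∞}, ordered so that −∞ is the minimum, +∞ is the maximum, and (s,i) ≤ (t,i) iff s ≤ t, with (s,1) and (t,2) incomparable. Let I and J be intervals of B both containing −∞ and not equal to B (type L intervals). Then Hom_B(k_I, k_J) ≠ 0 if and only if J ⊆ I. -/

import Mathlib

open CategoryTheory NNReal

/-- The upset `C^↑` generated by a subset of a poset. -/
def genUpset {P : Type} [PartialOrder P] (C : Set P) : Set P := {p | ∃ a ∈ C, a ≤ p}

/-- The downset `C^↓` generated by a subset of a poset. -/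
def genDownset {P : Type} [PartialOrder P] (C : Set P) : Set P := {p | ∃ a ∈ C, p ≤ a}

/-- Convexity of a subset of a poset. -/
def IsOrdConvex {P : Type} [PartialOrder P] (C : Set P) : Prop :=
  ∀ ⦃p q r : P⦄, p ∈ C → q ∈ C → p ≤ r → r ≤ q → r ∈ C

/-- Connectivity of a subset of a poset: any two elements are joined by a
fence of pairwise comparable elements inside the subset. -/
def IsFenceConnected {P : Type} [PartialOrder P] (C : Set P) : Prop :=
  ∀ ⦃p⦄, p ∈ C → ∀ ⦃q⦄, q ∈ C →
    Relation.ReflTransGen (fun a b => a ∈ C ∧ b ∈ C ∧ (a ≤ b ∨ b ≤ a)) p q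

/-- An interval of a poset: a convex and connected subset. -/
def IsItv {P : Type} [PartialOrder P] (C : Set P) : Prop :=
  IsOrdConvex C ∧ IsFenceConnected C

/-- `C` is a connected component of the subset `S` of a poset. -/
def IsFenceComponent {P : Type} [PartialOrder P] (S C : Set P) : Prop :=
  ∃ p ∈ S, C = {q | q ∈ S ∧
    Relation.ReflTransGen (fun a b => a ∈ S ∧ b ∈ S ∧ (a ≤ b ∨ b ≤ a)) p q}

attribute [local instance] Classical.propDecidable

/-- The interval module `k_I` attached to a convex subset `I` of a poset `P`:
it is `k` (here presented as `PLift (p ∈ I) → k`) at points of `I` with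
identity structure maps inside `I`, and `0` elsewhere. -/
noncomputable def itvMod (k : Type) [Field k] {P : Type} [PartialOrder P]
    (I : Set P) (hI : IsOrdConvex I) : P ⥤ ModuleCat k where
  obj p := ModuleCat.of k (PLift (p ∈ I) → k)
  map {p q} _ := ModuleCat.ofHom
    { toFun := fun v _ => if hp : p ∈ I then v ⟨hp⟩ else 0
      map_add' := by
        intro v w; funext hq; by_cases hp : p ∈ I <;> simp [hp]
      map_smul' := by
        intro c v; funext hq; by_cases hp : p ∈ I <;> simp [hp] }
  map_id p := by
    apply ModuleCat.hom_ext; apply LinearMap.ext; intro v; funext hq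
    rcases hq with ⟨hq⟩
    simp [hq]
  map_comp {p q r} f g := by
    apply ModuleCat.hom_ext; apply LinearMap.ext; intro v; funext hr
    rcases hr with ⟨hr⟩
    by_cases hp : p ∈ I
    · have hq : q ∈ I := hI hp hr (leOfHom f) (leOfHom g)
      simp [hp, hq]
    · by_cases hq : q ∈ I <;> simp [hp, hq] <;> rfl

/-- The (continuous) bipath poset `B`: two copies of `ℝ` (`up` and `down`)
joined at a global minimum `-∞` (`bot`) and a global maximum `+∞` (`top`),
with the two copies of `ℝ` mutually incomparable. -/
inductive Bipath : Type
  | bot : Bipath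
  | top : Bipath
  | up : ℝ → Bipath
  | down : ℝ → Bipath

namespace Bipath

/-- The order relation of the bipath poset. -/
def le : Bipath → Bipath → Prop
  | bot, _ => True
  | _, top => True
  | up r, up s => r ≤ s
  | down r, down s => r ≤ s
  | _, _ => False

instance : PartialOrder Bipath where
  le := Bipath.le
  le_refl x := by cases x <;> simp [Bipath.le]
  le_trans x y z hxy hyz := by
    cases x <;> cases y <;> cases z <;> simp_all [Bipath.le] <;> linarith
  le_antisymm x y h1 h2 := by
    cases x <;> cases y <;> simp_all [Bipath.le] <;> linarith

theorem le_iff (x y : Bipath) : x ≤ y ↔ Bipath.le x y := Iff.rfl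

/-- Shifting the bipath poset by `ε`: real coordinates are translated by `ε`
and `±∞` are fixed. -/
def shift (ε : ℝ) : Bipath → Bipath
  | bot => bot
  | top => top
  | up r => up (r + ε)
  | down r => down (r + ε)

theorem shift_mono (ε : ℝ) : Monotone (shift ε) := by
  intro x y h
  cases x <;> cases y <;> simp_all [shift, le_iff, Bipath.le]

theorem le_shift (ε : ℝ) (hε : 0 ≤ ε) (p : Bipath) : p ≤ shift ε p := by
  cases p <;> simp [shift, le_iff, Bipath.le] <;> linarith

theorem shift_neg_shift (ε : ℝ) (p : Bipath) : shift (-ε) (shift ε p) = p := by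
  cases p <;> simp [shift]

/-- The shift by `ε` as an order isomorphism of the bipath poset. -/
def shiftIso (ε : ℝ) : Bipath ≃o Bipath where
  toFun := shift ε
  invFun := shift (-ε)
  left_inv p := by cases p <;> simp [shift]
  right_inv p := by cases p <;> simp [shift]
  map_rel_iff' := by
    intro p q
    constructor
    · intro h
      have h2 := shift_mono (-ε) h
      simp only [Equiv.coe_fn_mk] at h2
      rwa [shift_neg_shift, shift_neg_shift] at h2
    · exact fun h => shift_mono ε h

end Bipath

/-- Auxiliary: the canonical projection `k_I ⟶ k_J` when `J ⊆ I` and `J` is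
downward closed inside `I`. -/
noncomputable def itvModHomOfSubset (k : Type) [Field k] {P : Type} [PartialOrder P]
    {I J : Set P} (hIc : IsOrdConvex I) (hJc : IsOrdConvex J) (hJI : J ⊆ I)
    (hdown : ∀ ⦃p q : P⦄, p ≤ q → q ∈ J → p ∈ I → p ∈ J) :
    itvMod k I hIc ⟶ itvMod k J hJc where
  app p := ModuleCat.ofHom
    { toFun := fun v hpJ => v ⟨hJI hpJ.down⟩
      map_add' := fun v w => rfl
      map_smul' := fun c v => rfl }
  naturality := by
    intro p q f
    apply ModuleCat.hom_ext; apply LinearMap.ext; intro v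
    funext hqJ
    show (if hp : p ∈ I then v ⟨hp⟩ else 0) = (if hp : p ∈ J then v ⟨hJI hp⟩ else 0)
    by_cases hp : p ∈ J
    · rw [dif_pos (hJI hp), dif_pos hp]
    · have hpI : p ∉ I := fun hpI' => hp (hdown (leOfHom f) hqJ.down hpI')
      rw [dif_neg hpI, dif_neg hp]

/-- For type-`L` intervals `I`, `J` of the bipath poset (both containing `-∞`
and different from the whole poset), `Hom_B(k_I, k_J) ≠ 0` iff `J ⊆ I`. -/
theorem hom_ne_zero_iff_subset_typeL (k : Type) [Field k]
    {I J : Set Bipath} (hI : IsItv I) (hJ : IsItv J)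
    (hIL : Bipath.bot ∈ I ∧ I ≠ Set.univ) (hJL : Bipath.bot ∈ J ∧ J ≠ Set.univ) :
    (∃ φ : itvMod k I hI.1 ⟶ itvMod k J hJ.1, φ ≠ 0) ↔ J ⊆ I := by
  have botle : ∀ p : Bipath, Bipath.bot ≤ p := fun p => by
    cases p <;> exact (Bipath.le_iff _ _).mpr trivial
  constructor
  · rintro ⟨φ, hφ⟩ q hqJ
    by_contra hqI
    apply hφ
    have hbot0 : ∀ w, φ.app Bipath.bot w = 0 := by
      intro w
      have hnat := φ.naturality (homOfLE (botle q))
      have h1 : φ.app q (((itvMod k I hI.1).map (homOfLE (botle q))) w)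
          = ((itvMod k J hJ.1).map (homOfLE (botle q))) (φ.app Bipath.bot w) :=
        congrArg (fun f => ModuleCat.Hom.hom f w) hnat
      have hIw : ((itvMod k I hI.1).map (homOfLE (botle q))) w = 0 :=
        funext fun h => absurd h.down hqI
      rw [hIw, map_zero] at h1
      have h2 : (if hb' : Bipath.bot ∈ J then (φ.app Bipath.bot w) ⟨hb'⟩ else (0:k)) = 0 :=
        congrFun h1.symm (⟨hqJ⟩ : PLift (q ∈ J))
      rw [dif_pos hJL.1] at h2
      funext hb
      have he : hb = (⟨hJL.1⟩ : PLift (Bipath.bot ∈ J)) := Subsingleton.elim _ _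
      rw [he]; exact h2
    have happ : ∀ p, φ.app p = 0 := by
      intro p
      apply ModuleCat.hom_ext; apply LinearMap.ext; intro v
      by_cases hpI : p ∈ I
      · have hnat := φ.naturality (homOfLE (botle p))
        have h1 : φ.app p (((itvMod k I hI.1).map (homOfLE (botle p))) (fun _ => v ⟨hpI⟩))
            = ((itvMod k J hJ.1).map (homOfLE (botle p))) (φ.app Bipath.bot (fun _ => v ⟨hpI⟩)) :=
          congrArg (fun f => ModuleCat.Hom.hom f (fun _ => v ⟨hpI⟩)) hnat
        have hIw : ((itvMod k I hI.1).map (homOfLE (botle p))) (fun _ => v ⟨hpI⟩) = v := by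
          funext h
          show (if hb : Bipath.bot ∈ I then v ⟨hpI⟩ else 0) = v h
          rw [dif_pos hIL.1]
        simp only [hIw] at h1
        exact h1.trans ((congrArg (ConcreteCategory.hom ((itvMod k J hJ.1).map (homOfLE (botle p)))) (hbot0 (fun _ => v ⟨hpI⟩))).trans (map_zero _))
      · have hv : v = 0 := funext fun h => absurd h.down hpI
        rw [hv, map_zero]
        rfl
    exact NatTrans.ext (funext happ)
  · intro hJI
    have hdown : ∀ ⦃p q : Bipath⦄, p ≤ q → q ∈ J → p ∈ I → p ∈ J :=
      fun p q hpq hq _ => hJ.1 hJL.1 hq (botle p) hpq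
    refine ⟨itvModHomOfSubset k hI.1 hJ.1 hJI hdown, ?_⟩
    intro h0
    have h1 := congrFun (LinearMap.congr_fun
      (congrArg (fun (ψ : itvMod k I hI.1 ⟶ itvMod k J hJ.1) => (NatTrans.app ψ Bipath.bot).hom) h0) (fun _ => (1:k)))
      (⟨hJL.1⟩ : PLift (Bipath.bot ∈ J))
    exact one_ne_zero h1
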